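/- arXiv:1409.5316 — 2 statements merged into one kernel-verified Lean document; each statement's English description precedes it below -/
import Mathlib

section
/- Let Λ ∈ ℝ^{m×m} be the non-zero skew-symmetric matrix built from the constants λ_{ij}. If m is an odd integer, or if m is even and Λ has a non-trivial kernel, then there exists a non-zero vector x ∈ ℝ^m with Λx = 0, and the linear one-homogeneous map u(R,θ) = R g(θ) with g(θ) = x cos θ + x sin θ satisfies the conservation law |g|² + |g'|² = c² for a constant c and solves ∫_B Dγ(∇u)·∇φ − Λ u,_τ · (φ/R) dx = 0 for all φ ∈ C_c^∞(B, ℝ^m). -/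
open MeasureTheory Metric Real Set Filter Matrix

noncomputable section

abbrev E2 : Type := EuclideanSpace ℝ (Fin 2)
abbrev EV (m : ℕ) : Type := EuclideanSpace ℝ (Fin m)

/-- The gradient of a map `u : ℝ² → ℝᵐ` as an `m × 2` matrix. -/
def mgrad {m : ℕ} (u : E2 → EV m) (x : E2) : Matrix (Fin m) (Fin 2) ℝ :=
  fun i j => fderiv ℝ u x (EuclideanSpace.single j 1) i

/-- The inner product `A · B = tr(Aᵀ B)` of two matrices. -/
def mdot {m n : ℕ} (A B : Matrix (Fin m) (Fin n) ℝ) : ℝ := ∑ i, ∑ j, A i j * B i j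

/-- The Frobenius norm of a matrix. -/
def frob {m n : ℕ} (A : Matrix (Fin m) (Fin n) ℝ) : ℝ := Real.sqrt (mdot A A)

/-- The 2×2 submatrix `F^{(i,j)}` of an `m × 2` matrix, rows `i` and `j`. -/
def sub2 {m : ℕ} (A : Matrix (Fin m) (Fin 2) ℝ) (i j : Fin m) : Matrix (Fin 2) (Fin 2) ℝ :=
  !![A i 0, A i 1; A j 0, A j 1]

/-- Cofactor matrix of a 2×2 matrix. -/
def cof2 (A : Matrix (Fin 2) (Fin 2) ℝ) : Matrix (Fin 2) (Fin 2) ℝ :=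
  !![A 1 1, -A 1 0; -A 0 1, A 0 0]

/-- Determinant of a 2×2 matrix. -/
def det2 (A : Matrix (Fin 2) (Fin 2) ℝ) : ℝ := A 0 0 * A 1 1 - A 0 1 * A 1 0

/-- The radial unit vector `e_R(θ)`. -/
def eRvec (θ : ℝ) : E2 :=
  Real.cos θ • EuclideanSpace.single (0 : Fin 2) (1:ℝ) +
    Real.sin θ • EuclideanSpace.single (1 : Fin 2) (1:ℝ)

/-- The tangential unit vector `e_θ(θ)`. -/
def eThvec (θ : ℝ) : E2 :=
  (-Real.sin θ) • EuclideanSpace.single (0 : Fin 2) (1:ℝ) +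
    Real.cos θ • EuclideanSpace.single (1 : Fin 2) (1:ℝ)

/-- The polar angle of a point of the plane. -/
def argx (x : E2) : ℝ := Complex.arg ⟨x 0, x 1⟩

/-- The point with polar coordinates `(R, θ)`. -/
def ppt (R θ : ℝ) : E2 := R • eRvec θ

/-- The radial derivative `u,_R` (directional derivative along `e_R`). -/
def dRad {m : ℕ} (u : E2 → EV m) (x : E2) : EV m := fderiv ℝ u x (‖x‖⁻¹ • x)

/-- The tangential derivative `u,_τ = (1/R) u,_θ` (directional derivative along `e_θ`). -/
def dTau {m : ℕ} (u : E2 → EV m) (x : E2) : EV m := fderiv ℝ u x (eThvec (argx x))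

/-- Test functions: smooth, compactly supported in `Ω`. -/
def IsTest {m : ℕ} (Ω : Set E2) (φ : E2 → EV m) : Prop :=
  ContDiff ℝ (⊤ : ℕ∞) φ ∧ HasCompactSupport φ ∧ tsupport φ ⊆ Ω

open Classical in
/-- `Dγ(F) = f'(|F|) F / |F|`, the derivative of `γ(F) = f(|F|)` (with `Dγ(0) = 0`). -/
def Dgam (f : ℝ → ℝ) {m : ℕ} (F : Matrix (Fin m) (Fin 2) ℝ) : Matrix (Fin m) (Fin 2) ℝ :=
  if frob F = 0 then 0 else (deriv f (frob F) / frob F) • F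

/-- The one-homogeneous map `u(R,θ) = R g(θ)` in Cartesian coordinates. -/
def polarMap {m : ℕ} (g : ℝ → EV m) (x : E2) : EV m := ‖x‖ • g (argx x)

/-- The scaled k-covering map `ū(R,θ) = a R e_R(kθ)`. -/
def ubar (a : ℝ) (k : ℕ) (x : E2) : E2 := (a * ‖x‖) • eRvec ((k : ℝ) * argx x)

/-- `φ^{(k)}(R,θ) = φ(k^{-1/2} R, kθ)`. -/
def phk (k : ℕ) (φ : E2 → E2) (x : E2) : E2 :=
  φ (ppt ((Real.sqrt k)⁻¹ * ‖x‖) ((k : ℝ) * argx x))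

/-- Membership of `W^{1,p}` of the ball of radius `r`, encoded via a.e. differentiability
together with `L^p` bounds on the function and its gradient. -/
def SobBall {m : ℕ} (p r : ℝ) (u : E2 → EV m) : Prop :=
  (∀ᵐ x ∂(volume.restrict (ball (0:E2) r)), DifferentiableAt ℝ u x) ∧
  IntegrableOn (fun x => ‖u x‖ ^ p) (ball (0:E2) r) volume ∧
  IntegrableOn (fun x => (frob (mgrad u x)) ^ p) (ball (0:E2) r) volume

/-- `u` is a critical point of `G(u) = ∫_{B_r} γ(∇u) + λ ln R det ∇u dx`. -/
def IsCrit (f : ℝ → ℝ) (lam r : ℝ) (u : E2 → E2) : Prop :=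
  ∀ φ : E2 → E2, IsTest (ball (0:E2) r) φ →
    (∫ x in ball (0:E2) r,
      (mdot (Dgam f (mgrad u x)) (mgrad φ x)
        + lam * Real.log ‖x‖ * mdot (cof2 (mgrad u x)) (mgrad φ x))) = 0

/-- Membership of the admissible class `A_p`: `W^{1,p}`, boundary value `ub`, `G(u)` finite. -/
def InAp (f : ℝ → ℝ) (lam r p : ℝ) (ub u : E2 → E2) : Prop :=
  SobBall p r u ∧ (∀ x ∈ sphere (0:E2) r, u x = ub x) ∧
  IntegrableOn (fun x => f (frob (mgrad u x)) + lam * Real.log ‖x‖ * det2 (mgrad u x))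
    (ball (0:E2) r) volume

/-- The value `G(u)` of the functional `G`. -/
def Gval (f : ℝ → ℝ) (lam r : ℝ) (u : E2 → E2) : ℝ :=
  ∫ x in ball (0:E2) r, (f (frob (mgrad u x)) + lam * Real.log ‖x‖ * det2 (mgrad u x))


/-- Reinterpret a plain vector as an element of Euclidean space. -/
def toEV {m : ℕ} (v : Fin m → ℝ) : EV m := WithLp.toLp 2 v

-- Auxiliary lemmas ------------------------------------------------------

theorem ibp_zero {m : ℕ} (φ : E2 → EV m) (hs : ContDiff ℝ (⊤ : ℕ∞) φ) (hc : HasCompactSupport φ)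
    (v : E2) : ∫ x, fderiv ℝ φ x v = 0 := by
  have hdiff : Differentiable ℝ φ := hs.differentiable (by simp)
  have hcont : Continuous fun x => fderiv ℝ φ x v :=
    (hs.continuous_fderiv (by simp)).clm_apply continuous_const
  have hcs : HasCompactSupport fun x => fderiv ℝ φ x v := hc.fderiv_apply ℝ v
  have hint : Integrable (fun x => fderiv ℝ φ x v) volume :=
    hcont.integrable_of_hasCompactSupport hcs
  have h1 : Integrable (fun x => (fderiv ℝ (fun _ : E2 => (1:ℝ)) x v) • φ x) volume := by
    simp [fderiv_fun_const]
  have h2 : Integrable (fun x => (1:ℝ) • fderiv ℝ φ x v) volume := by simpa using hint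
  have h3 : Integrable (fun x => (1:ℝ) • φ x) volume := by
    simpa using hs.continuous.integrable_of_hasCompactSupport hc
  have := integral_smul_fderiv_eq_neg_fderiv_smul_of_integrable (μ := volume)
    (f := fun _ : E2 => (1:ℝ)) (g := φ) (v := v) h1 h2 h3 (fun x _ => differentiableAt_const _) (fun x _ => hdiff x)
  simpa [fderiv_fun_const] using this

theorem comp_int {m : ℕ} (φ : E2 → EV m) (hs : ContDiff ℝ (⊤ : ℕ∞) φ)
    (hc : HasCompactSupport φ) (i : Fin m) (v : E2) :
    Continuous (fun x => fderiv ℝ φ x v i) ∧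
      HasCompactSupport (fun x => fderiv ℝ φ x v i) ∧
      Integrable (fun x => fderiv ℝ φ x v i) volume := by
  have hcont : Continuous fun x => fderiv ℝ φ x v :=
    (hs.continuous_fderiv (by simp)).clm_apply continuous_const
  have hconti : Continuous fun x => fderiv ℝ φ x v i :=
    (EuclideanSpace.proj i).continuous.comp hcont
  have hcsi : HasCompactSupport fun x => fderiv ℝ φ x v i :=
    (hc.fderiv_apply ℝ v).comp_left (g := fun w : EV m => w i) rfl
  exact ⟨hconti, hcsi, hconti.integrable_of_hasCompactSupport hcsi⟩

theorem grad_int_zero {m : ℕ} (φ : E2 → EV m) (hs : ContDiff ℝ (⊤ : ℕ∞) φ)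
    (hc : HasCompactSupport φ) (hsupp : tsupport φ ⊆ ball (0:E2) 1) (i : Fin m) (v : E2) :
    ∫ x in ball (0:E2) 1, fderiv ℝ φ x v i = 0 := by
  have hcont : Continuous fun x => fderiv ℝ φ x v :=
    (hs.continuous_fderiv (by simp)).clm_apply continuous_const
  have hint : Integrable (fun x => fderiv ℝ φ x v) volume :=
    hcont.integrable_of_hasCompactSupport (hc.fderiv_apply ℝ v)
  have hz : ∀ x ∉ ball (0:E2) 1, fderiv ℝ φ x v = 0 := by
    intro x hx
    have hxn : x ∉ tsupport φ := fun hmem => hx (hsupp hmem)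
    rw [fderiv_of_notMem_tsupport ℝ hxn]; rfl
  have key : ∫ x in ball (0:E2) 1, fderiv ℝ φ x v = 0 := by
    rw [setIntegral_eq_integral_of_forall_compl_eq_zero hz]
    exact ibp_zero φ hs hc v
  have := (EuclideanSpace.proj (𝕜 := ℝ) i).integral_comp_comm
    (hint.integrableOn (s := ball (0:E2) 1))
  simp only [PiLp.proj_apply] at this
  rw [this, key]
  simp

/-- Proposition `Hechler` (a)(i): if `Λ ≠ 0` is skew-symmetric and `m` is odd,
or `m` is even and `ker Λ` is non-trivial, then there is a non-zero `x` with `Λx = 0`, and the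
linear one-homogeneous map `u = R g(θ)`, `g(θ) = x cos θ + x sin θ`, satisfies the conservation
law and solves the weak Euler–Lagrange equation. -/
theorem statement_2 {m : ℕ} (f : ℝ → ℝ) (hf : DifferentiableOn ℝ f (Ici 0))
    (Λ : Matrix (Fin m) (Fin m) ℝ) (hskew : Λᵀ = -Λ) (hne : Λ ≠ 0)
    (hcase : Odd m ∨ (Even m ∧ ∃ v : Fin m → ℝ, v ≠ 0 ∧ Λ.mulVec v = 0)) :
    ∃ xv : EV m, xv ≠ 0 ∧ Λ.mulVec xv = 0 ∧
      (∃ c : ℝ, ∀ θ : ℝ,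
        ‖(Real.cos θ + Real.sin θ) • xv‖ ^ 2
          + ‖deriv (fun s : ℝ => (Real.cos s + Real.sin s) • xv) θ‖ ^ 2 = c ^ 2) ∧
      (∀ φ : E2 → EV m, IsTest (ball (0:E2) 1) φ →
        (∫ x in ball (0:E2) 1,
          (mdot (Dgam f (mgrad (fun y : E2 => (y 0 + y 1) • xv) x)) (mgrad φ x)
            - ∑ i, (∑ j, Λ i j * dTau (fun y : E2 => (y 0 + y 1) • xv) x j)
                * (φ x i / ‖x‖))) = 0) := by
  classical
  obtain ⟨v, hv0, hvk⟩ : ∃ v : Fin m → ℝ, v ≠ 0 ∧ Λ.mulVec v = 0 := by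
    rcases hcase with hodd | ⟨_, h⟩
    · have hdet : Λ.det = 0 := by
        have h1 : Λ.det = (-1) ^ m * Λ.det := by
          conv_lhs => rw [← Matrix.det_transpose, hskew, Matrix.det_neg]
          rw [Fintype.card_fin]
        rw [hodd.neg_one_pow] at h1
        linarith
      obtain ⟨w, hw, h0⟩ := Matrix.exists_mulVec_eq_zero_iff.2 hdet
      exact ⟨w, hw, h0⟩
    · exact h
  set xv : EV m := toEV v with hxv
  have hxv0 : xv ≠ 0 := fun h => hv0 (by simpa [hxv, toEV] using congrArg WithLp.ofLp h)
  have hker : Λ.mulVec xv = 0 := hvk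
  refine ⟨xv, hxv0, hker, ?_, ?_⟩
  · refine ⟨Real.sqrt 2 * ‖xv‖, fun θ => ?_⟩
    have hd : HasDerivAt (fun s : ℝ => (Real.cos s + Real.sin s) • xv)
        ((-Real.sin θ + Real.cos θ) • xv) θ :=
      ((Real.hasDerivAt_cos θ).add (Real.hasDerivAt_sin θ)).smul_const xv
    rw [hd.deriv, norm_smul, norm_smul]
    simp only [Real.norm_eq_abs, mul_pow, sq_abs]
    rw [Real.sq_sqrt (by norm_num : (0:ℝ) ≤ 2)]
    nlinarith [Real.sin_sq_add_cos_sq θ]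
  · rintro φ ⟨hφs, hφc, hφsupp⟩
    set c0 : E2 →L[ℝ] ℝ :=
      EuclideanSpace.proj (0 : Fin 2) + EuclideanSpace.proj (1 : Fin 2) with hc0
    have hc0app : ∀ y : E2, c0 y = y 0 + y 1 := fun y => rfl
    set u : E2 → EV m := fun y : E2 => (y 0 + y 1) • xv with hu
    have hU : ∀ x : E2, HasFDerivAt u (c0.smulRight xv) x := by
      intro x
      exact (c0.hasFDerivAt (x := x)).smul_const xv
    have hfd : ∀ x : E2, fderiv ℝ u x = c0.smulRight xv := fun x => (hU x).fderiv
    have hone : ∀ j : Fin 2, c0 (EuclideanSpace.single j (1:ℝ)) = 1 := by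
      intro j
      fin_cases j <;> simp [hc0app, EuclideanSpace.single_apply]
    have hgrad : ∀ x : E2, mgrad u x = Matrix.of fun (i : Fin m) (_ : Fin 2) => xv i := by
      intro x; funext i j
      show (fderiv ℝ u x (EuclideanSpace.single j 1)) i = xv i
      rw [hfd x]
      show (c0 (EuclideanSpace.single j (1:ℝ)) • xv) i = xv i
      rw [hone j, one_smul]
    have hTau : ∀ x : E2, ∀ i : Fin m, (∑ j, Λ i j * dTau u x j) = 0 := by
      intro x i
      have h2 : ∀ j, dTau u x j = c0 (eThvec (argx x)) * xv j := by
        intro j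
        show (fderiv ℝ u x (eThvec (argx x))) j = _
        rw [hfd x]; rfl
      have h3 : (∑ j, Λ i j * xv j) = 0 := by
        have := congrFun hker i
        simpa [Matrix.mulVec, dotProduct] using this
      calc ∑ j, Λ i j * dTau u x j
          = c0 (eThvec (argx x)) * ∑ j, Λ i j * xv j := by
            rw [Finset.mul_sum]
            exact Finset.sum_congr rfl fun j _ => by rw [h2 j]; ring
        _ = 0 := by rw [h3, mul_zero]
    set A : Matrix (Fin m) (Fin 2) ℝ :=
      Dgam f (Matrix.of fun (i : Fin m) (_ : Fin 2) => xv i) with hA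
    have hre : ∀ x : E2,
        (mdot (Dgam f (mgrad u x)) (mgrad φ x)
          - ∑ i, (∑ j, Λ i j * dTau u x j) * (φ x i / ‖x‖))
        = ∑ i, ∑ j, A i j * fderiv ℝ φ x (EuclideanSpace.single j 1) i := by
      intro x
      rw [hgrad x]
      simp only [hTau x, zero_mul, Finset.sum_const_zero, sub_zero]
      rfl
    have hstep : (∫ x in ball (0:E2) 1,
        (mdot (Dgam f (mgrad u x)) (mgrad φ x)
          - ∑ i, (∑ j, Λ i j * dTau u x j) * (φ x i / ‖x‖)))
        = ∫ x in ball (0:E2) 1,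
            ∑ i, ∑ j, A i j * fderiv ℝ φ x (EuclideanSpace.single j 1) i :=
      integral_congr_ae (Filter.Eventually.of_forall hre)
    rw [hstep]
    have hintij : ∀ (i : Fin m) (j : Fin 2),
        IntegrableOn (fun x => A i j * fderiv ℝ φ x (EuclideanSpace.single j 1) i)
          (ball (0:E2) 1) volume := by
      intro i j
      exact (((comp_int φ hφs hφc i (EuclideanSpace.single j 1)).2.2).const_mul _).integrableOn
    rw [integral_finset_sum _ (fun i _ => integrable_finset_sum _ fun j _ => hintij i j)]
    refine Finset.sum_eq_zero fun i _ => ?_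
    rw [integral_finset_sum _ (fun j _ => hintij i j)]
    refine Finset.sum_eq_zero fun j _ => ?_
    rw [MeasureTheory.integral_const_mul, grad_int_zero φ hφs hφc hφsupp i (EuclideanSpace.single j 1),
      mul_zero]

end
end

section
/- Let f be C² on (0,∞) with f''(t) > 0 for all t > 0, and let γ(F) = f(|F|) on ℝ^{2×2} be such that Dγ(0) exists and γ(F) ≥ γ(0) = 0 for all F. Then γ is strictly convex, i.e. γ(F') − γ(F) > Dγ(F)·(F'−F) for all F ≠ F', and consequently Dγ is strictly monotone, i.e. (Dγ(F') − Dγ(F))·(F'−F) > 0 for all F ≠ F', and Dγ is continuous. -/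
open MeasureTheory Metric Real Set Filter Matrix

noncomputable section

/-- The space of 2×2 matrices with the Frobenius (Euclidean) norm. -/
abbrev M2E : Type := EuclideanSpace ℝ (Fin 2 × Fin 2)

open Topology in
/-- Lemma `bach0` (i): if `f ∈ C²((0,∞))` with `f'' > 0`, `Dγ(0)` exists and
`γ(F) = f(|F|) ≥ γ(0) = 0`, then `γ` is strictly convex, `Dγ` is strictly monotone, and `Dγ`
is continuous. -/
theorem statement_6 (f : ℝ → ℝ)
    (hf : ContDiffOn ℝ 2 f (Ioi 0))
    (hf'' : ∀ s > (0:ℝ), 0 < deriv (deriv f) s)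
    (hdiff0 : DifferentiableAt ℝ (fun F : M2E => f ‖F‖) 0)
    (hγ0 : f 0 = 0) (hγpos : ∀ F : M2E, 0 ≤ f ‖F‖) :
    (∀ F F' : M2E, F ≠ F' →
        fderiv ℝ (fun G : M2E => f ‖G‖) F (F' - F) < f ‖F'‖ - f ‖F‖) ∧
    (∀ F F' : M2E, F ≠ F' →
        0 < fderiv ℝ (fun G : M2E => f ‖G‖) F' (F' - F)
              - fderiv ℝ (fun G : M2E => f ‖G‖) F (F' - F)) ∧
    Continuous (fun F : M2E => fderiv ℝ (fun G : M2E => f ‖G‖) F) := by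
  classical
  set γ : M2E → ℝ := fun F => f ‖F‖ with hγdef
  set e : M2E := EuclideanSpace.single ((0 : Fin 2), (0 : Fin 2)) (1:ℝ) with he
  have hnorme : ‖e‖ = 1 := by simp [he, EuclideanSpace.norm_single]
  set g : ℝ → ℝ := fun t => f |t| with hgdef
  have hγline : ∀ t : ℝ, γ (t • e) = g t := by
    intro t; simp [hγdef, hgdef, norm_smul, hnorme]
  have hγg : ∀ F : M2E, γ F = g ‖F‖ := fun F => by
    simp [hγdef, hgdef, abs_of_nonneg (norm_nonneg F)]
  have hgf : ∀ s ∈ Ioi (0:ℝ), g s = f s := fun s hs => by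
    simp [hgdef, abs_of_pos (show (0:ℝ) < s from hs)]
  have hgeq : ∀ s ∈ Ioi (0:ℝ), g =ᶠ[𝓝 s] f := by
    intro s hs
    filter_upwards [isOpen_Ioi.mem_nhds hs] with t ht using hgf t ht
  have hg00 : g 0 = 0 := by simp [hgdef, hγ0]
  -- differentiability of g at 0
  have hlinederiv : ∀ t : ℝ, HasDerivAt (fun t : ℝ => t • e) e t := by
    intro t; simpa using (hasDerivAt_id t).smul_const e
  have hg0 : DifferentiableAt ℝ g 0 := by
    have hd0' : DifferentiableAt ℝ γ ((fun t : ℝ => t • e) 0) := by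
      simpa using hdiff0
    have h := hd0'.comp (0:ℝ) ((hlinederiv 0).differentiableAt)
    have heq : (γ ∘ fun t : ℝ => t • e) = g := by
      funext t; exact hγline t
    rwa [heq] at h
  -- deriv g 0 = 0 by evenness
  have hgd0 : HasDerivAt g 0 0 := by
    have h1 : HasDerivAt g (deriv g 0) 0 := hg0.hasDerivAt
    have hneg : HasDerivAt (fun t : ℝ => -t) (-1) (0:ℝ) := by
      exact hasDerivAt_neg' 0
    have h1' : HasDerivAt g (deriv g 0) ((fun t : ℝ => -t) 0) := by
      simpa using h1
    have h2 : HasDerivAt (g ∘ fun t : ℝ => -t) (deriv g 0 * (-1)) 0 :=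
      HasDerivAt.comp (0:ℝ) h1' hneg
    have heq : (g ∘ fun t : ℝ => -t) = g := by
      funext t; simp [hgdef, abs_neg]
    rw [heq] at h2
    have := h1.unique h2
    have h0 : deriv g 0 = 0 := by linarith [this]
    rwa [h0] at h1
  have hgc0 : ContinuousAt g 0 := hg0.continuousAt
  have hfc0 : Tendsto f (𝓝[>] (0:ℝ)) (𝓝 0) := by
    have h := (hgc0.tendsto.mono_left (nhdsWithin_le_nhds (s := Ioi (0:ℝ))))
    rw [hg00] at h
    refine h.congr' ?_
    filter_upwards [self_mem_nhdsWithin] with t ht using hgf t ht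
  -- slope limit f t / t → 0
  have hslope : Tendsto (fun t => f t / t) (𝓝[>] (0:ℝ)) (𝓝 0) := by
    have h := hasDerivAt_iff_tendsto_slope.mp hgd0
    have h2 := h.mono_left
      (nhdsWithin_mono (0:ℝ) (fun t (ht : t ∈ Ioi 0) => ne_of_gt ht))
    refine h2.congr' ?_
    filter_upwards [self_mem_nhdsWithin] with t ht
    simp [slope_def_field, hg00, hgf t ht]
  have hfpos : ∀ t ≥ (0:ℝ), 0 ≤ f t := by
    intro t ht
    have h := hγpos (t • e)
    simpa [norm_smul, hnorme, abs_of_nonneg ht] using h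
  have hfdiff : ∀ s ∈ Ioi (0:ℝ), DifferentiableAt ℝ f s := fun s hs =>
    (hf.contDiffAt (isOpen_Ioi.mem_nhds hs)).differentiableAt two_ne_zero
  have hdfd : ∀ s ∈ Ioi (0:ℝ), DifferentiableAt ℝ (deriv f) s := fun s hs =>
    differentiableAt_of_deriv_ne_zero (hf'' s hs).ne'
  have hdfc : ContinuousOn (deriv f) (Ioi 0) := fun s hs =>
    ((hdfd s hs).continuousAt).continuousWithinAt
  have hmono : StrictMonoOn (deriv f) (Ioi 0) := by
    refine strictMonoOn_of_deriv_pos (convex_Ioi 0) hdfc ?_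
    intro x hx
    rw [interior_Ioi] at hx
    exact hf'' x hx
  -- mean value theorem helper
  have hmvt : ∀ a b : ℝ, 0 < a → a < b →
      ∃ c ∈ Ioo a b, deriv f c = (f b - f a) / (b - a) := by
    intro a b ha hab
    refine exists_deriv_eq_slope f hab ?_ ?_
    · exact hf.continuousOn.mono (fun x hx => lt_of_lt_of_le ha hx.1)
    · exact fun x hx => ((hfdiff x (lt_trans ha hx.1)).differentiableWithinAt)
  -- deriv f s ≥ f s / s ≥ 0
  have hge : ∀ s ∈ Ioi (0:ℝ), f s / s ≤ deriv f s := by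
    intro s hs
    have ht : Tendsto (fun t => (f s - f t) / (s - t)) (𝓝[>] (0:ℝ)) (𝓝 (f s / s)) := by
      have h1 : Tendsto (fun t => f s - f t) (𝓝[>] (0:ℝ)) (𝓝 (f s - 0)) :=
        tendsto_const_nhds.sub hfc0
      have h2 : Tendsto (fun t : ℝ => s - t) (𝓝[>] (0:ℝ)) (𝓝 (s - 0)) :=
        tendsto_const_nhds.sub (tendsto_id.mono_left nhdsWithin_le_nhds)
      have := h1.div h2 (by simpa using (ne_of_gt hs))
      simp only [sub_zero] at this; exact this
    refine le_of_tendsto ht ?_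
    filter_upwards [self_mem_nhdsWithin,
      (eventually_lt_nhds hs).filter_mono nhdsWithin_le_nhds] with t ht1 ht2
    obtain ⟨c, hc, hceq⟩ := hmvt t s ht1 ht2
    rw [← hceq]
    exact le_of_lt (hmono (lt_trans ht1 hc.1) hs hc.2)
  have hge0 : ∀ s ∈ Ioi (0:ℝ), 0 ≤ deriv f s := fun s hs =>
    le_trans (div_nonneg (hfpos s (le_of_lt hs)) (le_of_lt hs)) (hge s hs)
  have hpos : ∀ s ∈ Ioi (0:ℝ), 0 < deriv f s := by
    intro s hs
    have h2 : deriv f (s/2) < deriv f s := hmono (mem_Ioi.mpr (half_pos (mem_Ioi.mp hs))) hs (half_lt_self (mem_Ioi.mp hs))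
    exact lt_of_le_of_lt (hge0 _ (mem_Ioi.mpr (half_pos (mem_Ioi.mp hs)))) h2
  -- deriv f tends to 0 at 0⁺
  have hf'0 : Tendsto (deriv f) (𝓝[>] (0:ℝ)) (𝓝 0) := by
    have hub : ∀ t ∈ Ioi (0:ℝ), deriv f t ≤ 2 * (f (2*t) / (2*t)) := by
      intro t ht
      have ht' : (0:ℝ) < t := ht
      obtain ⟨c, hc, hceq⟩ := hmvt t (2*t) ht (by linarith)
      have h1 : deriv f t < deriv f c := hmono ht (lt_trans ht hc.1) hc.1
      have h2 : (f (2*t) - f t) / (2*t - t) ≤ f (2*t) / t := by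
        have hd : (2*t - t) = t := by ring
        rw [hd]
        gcongr
        linarith [hfpos t ht'.le]
      have h3 : f (2*t) / t = 2 * (f (2*t) / (2*t)) := by
        field_simp
      rw [hceq] at h1
      linarith
    have h2t : Tendsto (fun t : ℝ => 2*t) (𝓝[>] (0:ℝ)) (𝓝[>] (0:ℝ)) := by
      apply tendsto_nhdsWithin_of_tendsto_nhds_of_eventually_within
      · have : Tendsto (fun t : ℝ => 2*t) (𝓝 0) (𝓝 (2*0)) :=
          (tendsto_id.const_mul 2)
        simpa using this.mono_left nhdsWithin_le_nhds
      · filter_upwards [self_mem_nhdsWithin] with t (ht : (0:ℝ) < t)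
        exact mul_pos two_pos ht
    have htend2 : Tendsto (fun t : ℝ => 2 * (f (2*t) / (2*t))) (𝓝[>] (0:ℝ)) (𝓝 0) := by
      have := (hslope.comp h2t).const_mul 2
      simpa [Function.comp] using this
    refine squeeze_zero' ?_ ?_ htend2
    · filter_upwards [self_mem_nhdsWithin] with t ht using hge0 t ht
    · filter_upwards [self_mem_nhdsWithin] with t ht using hub t ht
  -- g is strictly convex and strictly monotone on [0, ∞)
  have hderivg : ∀ s ∈ Ioi (0:ℝ), deriv g s = deriv f s := fun s hs =>
    (hgeq s hs).deriv_eq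
  have hgcont : ContinuousOn g (Ici 0) := by
    intro s hs
    rcases eq_or_lt_of_le (mem_Ici.mp hs) with rfl | h
    · exact hgc0.continuousWithinAt
    · exact (((hfdiff s h).continuousAt.congr (hgeq s h).symm)).continuousWithinAt
  have hgconv : StrictConvexOn ℝ (Ici 0) g := by
    refine strictConvexOn_of_deriv2_pos (convex_Ici 0) hgcont ?_
    intro s hs
    rw [interior_Ici] at hs
    have hiter : deriv^[2] g s = deriv (deriv g) s := rfl
    rw [hiter]
    have heq2 : deriv (deriv g) s = deriv (deriv f) s := by
      apply Filter.EventuallyEq.deriv_eq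
      filter_upwards [isOpen_Ioi.mem_nhds hs] with t ht using hderivg t ht
    rw [heq2]
    exact hf'' s hs
  have hgmono : StrictMonoOn g (Ici 0) := by
    refine strictMonoOn_of_deriv_pos (convex_Ici 0) hgcont ?_
    intro s hs
    rw [interior_Ici] at hs
    rw [hderivg s hs]
    exact hpos s hs
  -- γ is strictly convex on the whole space
  have hγconv : StrictConvexOn ℝ (univ : Set M2E) γ := by
    refine ⟨convex_univ, ?_⟩
    intro F _ F' _ hne a b ha hb hab
    rw [hγg, hγg, hγg]
    have hnn : ∀ G : M2E, ‖G‖ ∈ Ici (0:ℝ) := fun G => norm_nonneg G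
    have htri : ‖a • F + b • F'‖ ≤ a * ‖F‖ + b * ‖F'‖ := by
      calc ‖a • F + b • F'‖ ≤ ‖a • F‖ + ‖b • F'‖ := norm_add_le _ _
        _ = a * ‖F‖ + b * ‖F'‖ := by
            rw [norm_smul, norm_smul, Real.norm_of_nonneg ha.le, Real.norm_of_nonneg hb.le]
    rcases eq_or_ne ‖F‖ ‖F'‖ with hr | hr
    · have hlt : ‖a • F + b • F'‖ < ‖F‖ :=
        norm_combo_lt_of_ne le_rfl (le_of_eq hr.symm) hne ha hb hab
      calc g ‖a • F + b • F'‖ < g ‖F‖ := hgmono (hnn _) (hnn F) hlt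
        _ = a * g ‖F‖ + b * g ‖F'‖ := by rw [← hr, ← add_mul, hab, one_mul]
    · have hm : a * ‖F‖ + b * ‖F'‖ ∈ Ici (0:ℝ) := by
        rw [mem_Ici]
        have h1 := norm_nonneg F; have h2 := norm_nonneg F'
        positivity
      have h1 : g ‖a • F + b • F'‖ ≤ g (a * ‖F‖ + b * ‖F'‖) :=
        hgmono.monotoneOn (hnn _) hm htri
      have h2 := hgconv.2 (hnn F) (hnn F') hr ha hb hab
      simp only [smul_eq_mul] at h2
      exact lt_of_le_of_lt h1 h2
  -- γ is differentiable everywhere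
  have hγdiff : ∀ F : M2E, DifferentiableAt ℝ γ F := by
    intro F
    rcases eq_or_ne F 0 with rfl | hF
    · exact hdiff0
    · have h1 : DifferentiableAt ℝ (fun G : M2E => ‖G‖) F :=
        (contDiffAt_norm (n := 1) ℝ hF).differentiableAt one_ne_zero
      have h2 : DifferentiableAt ℝ f ‖F‖ := hfdiff _ (norm_pos_iff.mpr hF)
      exact h2.comp F h1
  -- Part 1 : strict convexity inequality
  have part1 : ∀ F F' : M2E, F ≠ F' → fderiv ℝ γ F (F' - F) < γ F' - γ F := by
    intro F F' hne
    set v := F' - F with hv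
    have hvne : v ≠ 0 := sub_ne_zero.mpr hne.symm
    set φ : ℝ → ℝ := fun t => γ (F + t • v) with hφ
    have hline : ∀ t : ℝ, HasDerivAt (fun t : ℝ => F + t • v) v t := by
      intro t; simpa using ((hasDerivAt_id t).smul_const v).const_add F
    have hφd : HasDerivAt φ (fderiv ℝ γ F v) 0 := by
      have h := ((hγdiff (F + (0:ℝ) • v)).hasFDerivAt.comp_hasDerivAt 0 (hline 0))
      simp only [zero_smul, add_zero] at h; exact h
    have hφconv : StrictConvexOn ℝ (univ : Set ℝ) φ := by
      refine ⟨convex_univ, ?_⟩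
      intro s _ t _ hst a b ha hb hab
      have hFst : F + s • v ≠ F + t • v := by
        intro h
        apply hst
        have := add_left_cancel h
        have h2 : (s - t) • v = 0 := by rw [sub_smul, this, sub_self]
        rcases smul_eq_zero.mp h2 with h3 | h3
        · exact sub_eq_zero.mp h3
        · exact absurd h3 hvne
      have h := hγconv.2 (mem_univ (F + s • v)) (mem_univ (F + t • v)) hFst ha hb hab
      have hcomb : a • (F + s • v) + b • (F + t • v) = F + (a • s + b • t) • v := by
        rw [smul_add, smul_add, smul_smul, smul_smul, add_add_add_comm,
          ← add_smul, hab, one_smul, smul_eq_mul, smul_eq_mul, ← add_smul]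
      rw [hcomb] at h
      exact h
    have h := hφconv.lt_slope_of_hasDerivAt (mem_univ (0:ℝ)) (mem_univ (1:ℝ)) one_pos hφd
    rw [slope_def_field] at h
    have hφ0 : φ 0 = γ F := by simp [hφ]
    have hφ1 : φ 1 = γ F' := by simp [hφ, hv]
    rw [hφ0, hφ1] at h
    simpa using h
  refine ⟨part1, ?_, ?_⟩
  · -- Part 2 : strict monotonicity
    intro F F' hne
    have h1 := part1 F F' hne
    have h2 := part1 F' F hne.symm
    have h3 : fderiv ℝ γ F' (F - F') = - fderiv ℝ γ F' (F' - F) := by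
      rw [← map_neg]; congr 1; abel
    rw [h3] at h2
    have : fderiv ℝ γ F (F' - F) - fderiv ℝ γ F' (F' - F) < 0 := by
      have := add_lt_add h1 h2
      have hγFF : γ F' - γ F + (γ F - γ F') = 0 := by ring
      linarith
    linarith
  · -- Part 3 : continuity of the derivative
    -- Lipschitz bounds near 0
    have hglip : ∀ c > (0:ℝ), LipschitzOnWith (Real.toNNReal (deriv f c)) g (Icc 0 c) := by
      intro c hc
      set d : ℝ → ℝ := fun t => if t = 0 then 0 else deriv f t with hd
      refine (convex_Icc 0 c).lipschitzOnWith_of_nnnorm_hasDerivWithin_le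
        (f' := d) ?_ ?_
      · intro t ht
        rcases eq_or_lt_of_le ht.1 with rfl | htpos
        · simpa [hd] using hgd0.hasDerivWithinAt
        · have hgt : HasDerivAt g (deriv f t) t := by
            have h1 : HasDerivAt f (deriv f t) t := (hfdiff t htpos).hasDerivAt
            exact h1.congr_of_eventuallyEq (hgeq t htpos)
          simpa [hd, ne_of_gt htpos] using hgt.hasDerivWithinAt
      · intro t ht
        rcases eq_or_lt_of_le ht.1 with rfl | htpos
        · simp [hd]
        · have h1 : deriv f t ≤ deriv f c := by
            rcases eq_or_lt_of_le ht.2 with rfl | htc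
            · exact le_rfl
            · exact le_of_lt (hmono htpos (lt_trans htpos htc) htc)
          have h2 : 0 ≤ deriv f t := hge0 t htpos
          simp only [hd, if_neg (ne_of_gt htpos)]
          rw [← NNReal.coe_le_coe]
          rw [coe_nnnorm, Real.norm_of_nonneg h2, Real.coe_toNNReal _ (le_trans h2 h1)]
          exact h1
    have hγlip : ∀ c > (0:ℝ), LipschitzOnWith (Real.toNNReal (deriv f c)) γ (ball (0:M2E) c) := by
      intro c hc
      have hmaps : MapsTo (fun F : M2E => ‖F‖) (ball (0:M2E) c) (Icc 0 c) := by
        intro A hA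
        exact ⟨norm_nonneg A, (mem_ball_zero_iff.mp hA).le⟩
      have h := (hglip c hc).comp (lipschitzWith_one_norm.lipschitzOnWith) hmaps
      have heq : (g ∘ fun F : M2E => ‖F‖) = γ := by
        funext A; exact (hγg A).symm
      rw [heq] at h
      simpa using h
    have hbound : ∀ c > (0:ℝ), ∀ F : M2E, ‖F‖ < c →
        ‖fderiv ℝ γ F‖ ≤ Real.toNNReal (deriv f c) := by
      intro c hc F hF
      exact norm_fderiv_le_of_lipschitzOn ℝ
        ((isOpen_ball).mem_nhds (mem_ball_zero_iff.mpr hF)) (hγlip c hc)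
    have htoNN : Tendsto (fun c => (Real.toNNReal (deriv f c) : ℝ)) (𝓝[>] (0:ℝ)) (𝓝 0) := by
      refine hf'0.congr' ?_
      filter_upwards [self_mem_nhdsWithin] with c hc
      rw [Real.coe_toNNReal _ (hge0 c hc)]
    have h0 : fderiv ℝ γ 0 = 0 := by
      have hb : ‖fderiv ℝ γ 0‖ ≤ 0 := by
        refine ge_of_tendsto htoNN ?_
        filter_upwards [self_mem_nhdsWithin] with c hc
        exact hbound c hc 0 (by simpa using hc)
      exact norm_le_zero_iff.mp hb
    have hcont0 : ContinuousAt (fun F : M2E => fderiv ℝ γ F) 0 := by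
      rw [ContinuousAt, h0]
      rw [NormedAddCommGroup.tendsto_nhds_zero]
      intro ε hε
      obtain ⟨c, hcε, hc0⟩ :=
        ((hf'0.eventually (eventually_lt_nhds hε)).and self_mem_nhdsWithin).exists
      filter_upwards [ball_mem_nhds (0:M2E) hc0] with F hF
      have h1 := hbound c hc0 F (mem_ball_zero_iff.mp hF)
      have h2 : (Real.toNNReal (deriv f c) : ℝ) = deriv f c :=
        Real.coe_toNNReal _ (hge0 c hc0)
      rw [h2] at h1
      exact lt_of_le_of_lt h1 hcε
    have hopen : IsOpen {F : M2E | F ≠ 0} := isOpen_compl_singleton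
    have hγC1 : ContDiffOn ℝ 1 γ {F : M2E | F ≠ 0} := by
      intro F hF
      apply ContDiffAt.contDiffWithinAt
      have h1 : ContDiffAt ℝ 1 (fun G : M2E => ‖G‖) F := contDiffAt_norm (n := 1) ℝ hF
      have h2 : ContDiffAt ℝ 1 f ‖F‖ :=
        (hf.contDiffAt (isOpen_Ioi.mem_nhds (norm_pos_iff.mpr hF))).of_le one_le_two
      exact h2.comp F h1
    have hcont' := hγC1.continuousOn_fderiv_of_isOpen hopen le_rfl
    rw [continuous_iff_continuousAt]
    intro F
    rcases eq_or_ne F 0 with rfl | hF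
    · exact hcont0
    · exact (hcont'.continuousAt (hopen.mem_nhds hF))

end
end
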